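/- For positive integers k, l_1, l_2, p and nonnegative integers m, n_1, n_2, the stuffle product z_k z_p^m * z_{l_1} z_p^{n_1} z_{l_2} z_p^{n_2} equals the five-term expression: Σ_{0≤i_1≤i_2≤m} z_k(z_p^{i_1} z_{l_1} + z_p^{i_1-1} z_{p+l_1})[(z_p^{i_2-i_1} * z_p^{n_1}) z_{l_2} + (z_p^{i_2-i_1-1} * z_p^{n_1}) z_{p+l_2}](z_p^{m-i_2} * z_p^{n_2}) + Σ_{0≤i_1≤n_1, 0≤i_2≤m} z_{l_1}(z_p^{i_1} z_k + z_p^{i_1-1} z_{p+k})[(z_p^{i_2} * z_p^{n_1-i_1}) z_{l_2} + (z_p^{i_2-1} * z_p^{n_1-i_1}) z_{p+l_2}](z_p^{m-i_2} * z_p^{n_2}) + z_{l_1} z_p^{n_1} z_{k+l_2}(z_p^m * z_p^{n_2}) + Σ_{0≤i≤n_2} z_{l_1} z_p^{n_1} z_{l_2}(z_p^i z_k + z_p^{i-1} z_{p+k})(z_p^m * z_p^{n_2-i}) + Σ_{0≤i≤m} z_{k+l_1}[(z_p^i * z_p^{n_1}) z_{l_2} + (z_p^{i-1} * z_p^{n_1})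 z_{p+l_2}](z_p^{m-i} * z_p^{n_2}), with convention z_p^{-1} = 0. -/

import Mathlib

open MonoidAlgebra Finset

abbrev H : Type := MonoidAlgebra ℚ (FreeMonoid ℕ+)

noncomputable def word (w : List ℕ+) : H := MonoidAlgebra.single (FreeMonoid.ofList w) 1

noncomputable def z (k : ℕ+) : H := word [k]

noncomputable def st : List ℕ+ → List ℕ+ → H
  | [], w => word w
  | k :: w1, [] => word (k :: w1)
  | k :: w1, l :: w2 =>
      z k * st w1 (l :: w2) + z l * st (k :: w1) w2 + z (k + l) * st w1 w2
termination_by a b => a.length + b.length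
decreasing_by all_goals (simp; try omega)

lemma word_append (u v : List ℕ+) : word (u ++ v) = word u * word v := by
  simp [word, MonoidAlgebra.single_mul_single]

lemma word_nil : word [] = 1 := rfl

lemma word_cons (a : ℕ+) (w : List ℕ+) : word (a :: w) = z a * word w := by
  simpa [z] using word_append [a] w

lemma st_nil (w : List ℕ+) : st [] w = word w := by simp [st]

lemma st_nil' (w : List ℕ+) : st w [] = word w := by cases w <;> simp [st]

lemma st_cons (k l : ℕ+) (w1 w2 : List ℕ+) :
    st (k :: w1) (l :: w2) =
      z k * st w1 (l :: w2) + z l * st (k :: w1) w2 + z (k + l) * st w1 w2 := by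
  rw [st]

/-- triangle reindexing -/
lemma tri (m : ℕ) (F : ℕ → ℕ → H) :
    ∑ i ∈ range (m + 1), ∑ j ∈ range (m - i + 1), F i j
      = ∑ s ∈ range (m + 1), ∑ i ∈ range (s + 1), F i (s - i) := by
  induction m with
  | zero => simp
  | succ m ih =>
    rw [Finset.sum_range_succ (n := m + 1), Finset.sum_range_succ (n := m + 1)]
    have h1 : ∑ i ∈ range (m + 1), ∑ j ∈ range (m + 1 - i + 1), F i j
        = (∑ i ∈ range (m + 1), ∑ j ∈ range (m - i + 1), F i j)
          + ∑ i ∈ range (m + 1), F i (m + 1 - i) := by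
      rw [← Finset.sum_add_distrib]
      refine Finset.sum_congr rfl fun i hi => ?_
      have hi' : i ≤ m := by simpa [Nat.lt_succ_iff] using hi
      have : m + 1 - i + 1 = (m - i + 1) + 1 := by omega
      rw [this, Finset.sum_range_succ]
      congr 2
      omega
    have h2 : ∑ i ∈ range (m + 1 + 1), F i (m + 1 - i)
        = (∑ i ∈ range (m + 1), F i (m + 1 - i)) + F (m + 1) 0 := by
      rw [Finset.sum_range_succ]
      simp
    rw [h1, h2, ih]
    have : m + 1 - (m + 1) + 1 = 1 := by omega
    rw [this]
    simp [Finset.sum_range_one]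
    abel

lemma word_repl_succ (p : ℕ+) (n : ℕ) :
    word (List.replicate (n + 1) p) = z p * word (List.replicate n p) := by
  rw [List.replicate_succ, word_cons]

lemma st_pow_succ_succ (p : ℕ+) (a b : ℕ) :
    st (List.replicate (a + 1) p) (List.replicate (b + 1) p)
      = z p * st (List.replicate a p) (List.replicate (b + 1) p)
        + z p * st (List.replicate (a + 1) p) (List.replicate b p)
        + z (p + p) * st (List.replicate a p) (List.replicate b p) := by
  rw [List.replicate_succ, List.replicate_succ (n := b), st_cons, ← List.replicate_succ]

noncomputable def stm (p : ℕ+) (j n : ℕ) : H :=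
  match j with
  | 0 => 0
  | j + 1 => st (List.replicate j p) (List.replicate n p)

noncomputable def B (p : ℕ+) (n : ℕ) (l : ℕ+) (j : ℕ) : H :=
  st (List.replicate j p) (List.replicate n p) * z l + stm p j n * z (p + l)

lemma B_eq_if (p : ℕ+) (n : ℕ) (l : ℕ+) (j : ℕ) :
    B p n l j = st (List.replicate j p) (List.replicate n p) * z l
      + if 1 ≤ j then st (List.replicate (j - 1) p) (List.replicate n p) * z (p + l) else 0 := by
  cases j <;> simp [B, stm]

lemma B_apply_zero (p : ℕ+) (n : ℕ) (l : ℕ+) :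
    B p n l 0 = word (List.replicate n p) * z l := by
  simp [B, stm, st_nil]

lemma B_zero_zero (p l : ℕ+) : B p 0 l 0 = z l := by
  simp [B_apply_zero, word_nil]

lemma word_singleton (a : ℕ+) : word [a] = z a := rfl

lemma B_zero_succ (p l : ℕ+) (j : ℕ) :
    B p 0 l (j + 1) = z p * B p 0 l j + (if j = 0 then z (p + l) else 0) := by
  cases j with
  | zero => simp [B, stm, st_nil', word_repl_succ, word_nil, word_singleton, mul_add, mul_assoc]
  | succ j => simp [B, stm, st_nil', word_repl_succ, mul_add, mul_assoc]

lemma B_succ_zero (p l : ℕ+) (n : ℕ) :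
    B p (n + 1) l 0 = z p * B p n l 0 := by
  simp [B_apply_zero, word_repl_succ, mul_assoc]

lemma B_succ_succ (p l : ℕ+) (n j : ℕ) :
    B p (n + 1) l (j + 1)
      = z p * B p (n + 1) l j + z p * B p n l (j + 1) + z (p + p) * B p n l j := by
  cases j with
  | zero =>
    have h := st_pow_succ_succ p 0 n
    simp only [Nat.zero_add, List.replicate_zero] at h
    simp only [B, stm, h, List.replicate_zero, st_nil, word_repl_succ]
    simp [mul_add, add_mul, mul_assoc]
    abel
  | succ j =>
    simp only [B, stm, st_pow_succ_succ]
    simp [mul_add, add_mul, mul_assoc]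
    abel

lemma L1aux : ∀ (N : ℕ) (p l : ℕ+) (w : List ℕ+) (a n : ℕ), a + n ≤ N →
    st (List.replicate a p) (List.replicate n p ++ l :: w)
      = ∑ j ∈ range (a + 1), B p n l j * st (List.replicate (a - j) p) w := by
  intro N
  induction N with
  | zero =>
    intro p l w a n h
    have ha : a = 0 := by omega
    have hn : n = 0 := by omega
    subst ha hn
    simp [st_nil, word_cons, B_zero_zero]
  | succ N ih =>
    intro p l w a n h
    match a with
    | 0 => simp [st_nil, word_append, word_cons, B_apply_zero, mul_assoc]
    | a' + 1 =>
      match n with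
      | 0 =>
        have ih0 := ih p l w a' 0 (by omega)
        simp only [List.replicate_zero, List.nil_append] at ih0 ⊢
        rw [List.replicate_succ, st_cons, ← List.replicate_succ, ih0]
        conv_rhs => rw [Finset.sum_range_succ']
        simp only [Nat.succ_sub_succ, B_zero_succ, B_zero_zero, Nat.sub_zero,
          add_mul, ite_mul, zero_mul, Finset.sum_add_distrib, mul_assoc,
          ← Finset.mul_sum, Finset.sum_ite_eq', Finset.mem_range]
        simp only [Nat.lt_add_one_iff, Nat.zero_le, if_true, Nat.sub_zero]
        abel
      | n'' + 1 =>
        have e1 : List.replicate (n'' + 1) p ++ l :: w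
            = p :: (List.replicate n'' p ++ l :: w) := by simp [List.replicate_succ]
        rw [List.replicate_succ (n := a'), e1, st_cons, ← e1, ← List.replicate_succ]
        rw [ih p l w a' (n'' + 1) (by omega), ih p l w (a' + 1) n'' (by omega),
          ih p l w a' n'' (by omega)]
        rw [Finset.sum_range_succ' (n := a' + 1), Finset.sum_range_succ' (n := a' + 1)]
        simp only [Nat.succ_sub_succ, Nat.sub_zero, B_succ_succ, B_succ_zero,
          add_mul, Finset.sum_add_distrib, Finset.mul_sum, mul_add, mul_assoc]
        abel

lemma L1 (p l : ℕ+) (w : List ℕ+) (a n : ℕ) :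
    st (List.replicate a p) (List.replicate n p ++ l :: w)
      = ∑ j ∈ range (a + 1), B p n l j * st (List.replicate (a - j) p) w :=
  L1aux (a + n) p l w a n le_rfl

lemma L4 (p k : ℕ+) (m : ℕ) : ∀ n, st (k :: List.replicate m p) (List.replicate n p)
    = ∑ i ∈ range (n + 1), B p 0 k i * st (List.replicate m p) (List.replicate (n - i) p) := by
  intro n
  induction n with
  | zero => simp [st_nil', word_cons, B_zero_zero]
  | succ n ihn =>
    rw [List.replicate_succ, st_cons, ← List.replicate_succ, ihn]
    conv_rhs => rw [Finset.sum_range_succ']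
    simp only [Nat.succ_sub_succ, B_zero_succ, B_zero_zero, Nat.sub_zero,
      add_mul, ite_mul, zero_mul, Finset.sum_add_distrib, mul_assoc,
      ← Finset.mul_sum, Finset.sum_ite_eq', Finset.mem_range]
    simp only [Nat.lt_add_one_iff, Nat.zero_le, if_true, Nat.sub_zero]
    rw [add_comm k p]
    abel

lemma sum_sum_ite_zero (s t : Finset ℕ) (h : 0 ∈ s) (G : ℕ → ℕ → H) :
    (∑ x ∈ s, ∑ y ∈ t, if x = 0 then G x y else 0) = ∑ y ∈ t, G 0 y := by
  rw [Finset.sum_comm]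
  simp [h]

lemma L3 (p k l2 : ℕ+) (m n2 : ℕ) : ∀ n1,
    st (k :: List.replicate m p) (List.replicate n1 p ++ l2 :: List.replicate n2 p)
    = (∑ i1 ∈ range (n1 + 1), ∑ i2 ∈ range (m + 1),
        B p 0 k i1 * (B p (n1 - i1) l2 i2
          * st (List.replicate (m - i2) p) (List.replicate n2 p)))
      + word (List.replicate n1 p)
          * (z (k + l2) * st (List.replicate m p) (List.replicate n2 p))
      + ∑ i ∈ range (n2 + 1), word (List.replicate n1 p)
          * (z l2 * (B p 0 k i * st (List.replicate m p) (List.replicate (n2 - i) p))) := by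
  intro n1
  induction n1 with
  | zero =>
    have h1 := L1 p l2 (List.replicate n2 p) m 0
    simp only [List.replicate_zero, List.nil_append] at h1 ⊢
    rw [st_cons, h1, L4]
    simp [B_zero_zero, word_nil, Finset.mul_sum, mul_assoc]
    abel
  | succ n1 ihn =>
    have e1 : List.replicate (n1 + 1) p ++ l2 :: List.replicate n2 p
        = p :: (List.replicate n1 p ++ l2 :: List.replicate n2 p) := by
      simp [List.replicate_succ]
    rw [e1, st_cons, ← e1, ihn, L1 p l2 (List.replicate n2 p) m (n1 + 1),
      L1 p l2 (List.replicate n2 p) m n1]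
    conv_rhs => rw [Finset.sum_range_succ']
    simp only [Nat.succ_sub_succ, Nat.sub_zero, B_zero_succ, B_zero_zero, word_repl_succ,
      add_mul, mul_add, ite_mul, zero_mul, Finset.sum_add_distrib, mul_assoc,
      ← Finset.mul_sum, Finset.sum_ite_eq', Finset.mem_range]
    rw [sum_sum_ite_zero _ _ (by simp)]
    simp only [Nat.sub_zero, ← Finset.mul_sum]
    rw [add_comm k p]
    abel

lemma B_eq_word (p : ℕ+) (l : ℕ+) (i : ℕ) :
    B p 0 l i = word (List.replicate i p) * z l
      + if 1 ≤ i then word (List.replicate (i - 1) p) * z (p + l) else 0 := by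
  cases i <;> simp [B, stm, st_nil']

theorem st_one_two (k l1 l2 p : ℕ+) (m n1 n2 : ℕ) :
    st (k :: List.replicate m p) (l1 :: (List.replicate n1 p ++ l2 :: List.replicate n2 p)) =
      (∑ i2 ∈ Finset.range (m + 1), ∑ i1 ∈ Finset.range (i2 + 1),
        z k * (word (List.replicate i1 p) * z l1
            + if 1 ≤ i1 then word (List.replicate (i1 - 1) p) * z (p + l1) else 0)
        * (st (List.replicate (i2 - i1) p) (List.replicate n1 p) * z l2
            + if i1 < i2 then
                st (List.replicate (i2 - i1 - 1) p) (List.replicate n1 p) * z (p + l2)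
              else 0)
        * st (List.replicate (m - i2) p) (List.replicate n2 p))
      + (∑ i1 ∈ Finset.range (n1 + 1), ∑ i2 ∈ Finset.range (m + 1),
        z l1 * (word (List.replicate i1 p) * z k
            + if 1 ≤ i1 then word (List.replicate (i1 - 1) p) * z (p + k) else 0)
        * (st (List.replicate i2 p) (List.replicate (n1 - i1) p) * z l2
            + if 1 ≤ i2 then
                st (List.replicate (i2 - 1) p) (List.replicate (n1 - i1) p) * z (p + l2)
              else 0)
        * st (List.replicate (m - i2) p) (List.replicate n2 p))
      + word (l1 :: List.replicate n1 p) * z (k + l2)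
          * st (List.replicate m p) (List.replicate n2 p)
      + (∑ i ∈ Finset.range (n2 + 1),
        word (l1 :: List.replicate n1 p) * z l2
        * (word (List.replicate i p) * z k
            + if 1 ≤ i then word (List.replicate (i - 1) p) * z (p + k) else 0)
        * st (List.replicate m p) (List.replicate (n2 - i) p))
      + (∑ i ∈ Finset.range (m + 1),
        z (k + l1)
        * (st (List.replicate i p) (List.replicate n1 p) * z l2
            + if 1 ≤ i then st (List.replicate (i - 1) p) (List.replicate n1 p) * z (p + l2)
              else 0)
        * st (List.replicate (m - i) p) (List.replicate n2 p)) := by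
  have h1 := L1 p l1 (List.replicate n1 p ++ l2 :: List.replicate n2 p) m 0
  simp only [List.replicate_zero, List.nil_append] at h1
  rw [st_cons, L3 p k l2 m n2 n1, L1 p l2 (List.replicate n2 p) m n1, h1]
  simp only [L1 p l2 (List.replicate n2 p)]
  -- five term identifications
  have eT1 : z k * ∑ i1 ∈ range (m + 1), B p 0 l1 i1 *
        ∑ j ∈ range (m - i1 + 1), B p n1 l2 j
          * st (List.replicate (m - i1 - j) p) (List.replicate n2 p)
      = ∑ i2 ∈ Finset.range (m + 1), ∑ i1 ∈ Finset.range (i2 + 1),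
        z k * (word (List.replicate i1 p) * z l1
            + if 1 ≤ i1 then word (List.replicate (i1 - 1) p) * z (p + l1) else 0)
        * (st (List.replicate (i2 - i1) p) (List.replicate n1 p) * z l2
            + if i1 < i2 then
                st (List.replicate (i2 - i1 - 1) p) (List.replicate n1 p) * z (p + l2)
              else 0)
        * st (List.replicate (m - i2) p) (List.replicate n2 p) := by
    simp only [Finset.mul_sum]
    rw [tri m (fun i1 j => z k * (B p 0 l1 i1 * (B p n1 l2 j
      * st (List.replicate (m - i1 - j) p) (List.replicate n2 p))))]
    refine Finset.sum_congr rfl fun i2 hi2 => Finset.sum_congr rfl fun i1 hi1 => ?_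
    simp only [Finset.mem_range, Nat.lt_add_one_iff] at hi1 hi2
    have e1 : m - i1 - (i2 - i1) = m - i2 := by omega
    have e2 : (1 ≤ i2 - i1) ↔ (i1 < i2) := by omega
    rw [e1, B_eq_word, B_eq_if, if_congr e2 rfl rfl]
    simp only [mul_assoc]
  have eT2 : ∀ i1 i2 : ℕ,
      z l1 * (B p 0 k i1 * (B p (n1 - i1) l2 i2
          * st (List.replicate (m - i2) p) (List.replicate n2 p)))
      = z l1 * (word (List.replicate i1 p) * z k
            + if 1 ≤ i1 then word (List.replicate (i1 - 1) p) * z (p + k) else 0)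
        * (st (List.replicate i2 p) (List.replicate (n1 - i1) p) * z l2
            + if 1 ≤ i2 then
                st (List.replicate (i2 - 1) p) (List.replicate (n1 - i1) p) * z (p + l2)
              else 0)
        * st (List.replicate (m - i2) p) (List.replicate n2 p) := by
    intro i1 i2
    rw [B_eq_word, B_eq_if]
    simp only [mul_assoc]
  have eT4 : ∀ i : ℕ,
      z l1 * (word (List.replicate n1 p) * (z l2
        * (B p 0 k i * st (List.replicate m p) (List.replicate (n2 - i) p))))
      = word (l1 :: List.replicate n1 p) * z l2
        * (word (List.replicate i p) * z k
            + if 1 ≤ i then word (List.replicate (i - 1) p) * z (p + k) else 0)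
        * st (List.replicate m p) (List.replicate (n2 - i) p) := by
    intro i
    rw [B_eq_word, word_cons]
    simp only [mul_assoc]
  have eT5 : ∀ i : ℕ,
      z (k + l1) * (B p n1 l2 i * st (List.replicate (m - i) p) (List.replicate n2 p))
      = z (k + l1)
        * (st (List.replicate i p) (List.replicate n1 p) * z l2
            + if 1 ≤ i then st (List.replicate (i - 1) p) (List.replicate n1 p) * z (p + l2)
              else 0)
        * st (List.replicate (m - i) p) (List.replicate n2 p) := by
    intro i
    rw [B_eq_if]
    simp only [mul_assoc]
  rw [eT1]
  simp only [mul_add, Finset.mul_sum, eT2, eT4, eT5]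
  rw [word_cons]
  simp only [mul_assoc]
  abel
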